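/- Let B be an infinite finitely generated group and S a finite symmetric generating set of B. Then (B, S ∪ S² ∪ S³) is a quasi-Hamiltonian presentation, where S^k = {s₁s₂⋯s_k : s₁,…,s_k ∈ S}. In particular, every infinite finitely generated group admits a quasi-Hamiltonian presentation. -/

import Mathlib

open scoped Classical

/-- The word length of `g` with respect to a generating set `S`: the least `n` such that
`g` is a product of `n` elements of `S`. -/
noncomputable def wordLength {G : Type*} [Group G] (S : Set G) (g : G) : ℕ :=
  sInf {n | ∃ l : List G, (∀ x ∈ l, x ∈ S) ∧ l.length = n ∧ l.prod = g}

/-- `g` has depth at least `n` with respect to `S`: multiplying `g` by between `1` and `n`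
generators of `S` never increases word length. -/
def HasDepthAtLeast {G : Type*} [Group G] (S : Set G) (g : G) (n : ℕ) : Prop :=
  ∀ l : List G, (∀ x ∈ l, x ∈ S) → 1 ≤ l.length → l.length ≤ n →
    wordLength S (g * l.prod) ≤ wordLength S g

/-- `(G, S)` has unbounded depth: for every `n` there is an element of depth at least `n`. -/
def UnboundedDepth {G : Type*} [Group G] (S : Set G) : Prop :=
  ∀ n : ℕ, ∃ g : G, HasDepthAtLeast S g n

/-- `S` is a finite symmetric generating set of `G`. -/
structure IsSymmGen {G : Type*} [Group G] (S : Set G) : Prop where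
  finite : S.Finite
  symm : ∀ s ∈ S, s⁻¹ ∈ S
  closure_eq_top : Subgroup.closure S = ⊤

/-- The Cayley graph of `G` with respect to `S`: an edge between `g` and `g * s` for
each `s ∈ S`. -/
def cayley {G : Type*} [Group G] (S : Set G) : SimpleGraph G :=
  SimpleGraph.fromRel (fun x y => ∃ s ∈ S, y = x * s)

/-- `TS S b b' F`: the minimal number of edges of a walk in the Cayley graph `Cay(G, S)`
from `b` to `b'` that visits every element of `F` (`0` if no such walk exists). -/
noncomputable def TS {G : Type*} [Group G] (S : Set G) (b b' : G) (F : Set G) : ℕ :=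
  sInf {n | ∃ w : (cayley S).Walk b b', (∀ x ∈ F, x ∈ w.support) ∧ w.length = n}

/-- `(B, S)` is a quasi-Hamiltonian presentation: there are `M ≥ 0` and a family `𝓕` of
finite subsets of `B`, each containing `1` and inducing a connected subgraph of the Cayley
graph, such that every ball about `1` is contained in a member of `𝓕`, and
`TS 1 x F ≤ |F| + M` for every `F ∈ 𝓕` and `x ∈ F`. -/
def IsQuasiHamiltonian {B : Type*} [Group B] (S : Set B) : Prop :=
  ∃ M : ℕ, ∃ 𝓕 : Set (Finset B),
    (∀ F ∈ 𝓕, (1 : B) ∈ F ∧ ((cayley S).induce (↑F : Set B)).Connected) ∧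
    (∀ n : ℕ, 1 ≤ n → ∃ F ∈ 𝓕, ∀ x : B, wordLength S x ≤ n → x ∈ F) ∧
    (∀ F ∈ 𝓕, ∀ x ∈ F, TS S 1 x (↑F : Set B) ≤ F.card + M)


namespace QH
open List

variable {B : Type*}

/-- Rooted trees with vertices labelled in `B`. -/
inductive RT (B : Type*) : Type _ where
  | node : B → List (RT B) → RT B

namespace RT

def root : RT B → B
  | .node v _ => v

mutual
def verts : RT B → List B
  | .node v ts => v :: vertsF ts
def vertsF : List (RT B) → List B
  | [] => []
  | t :: ts => verts t ++ vertsF ts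
end

@[simp] lemma verts_node (v : B) (ts : List (RT B)) : verts (.node v ts) = v :: vertsF ts := by
  rw [verts]
@[simp] lemma vertsF_nil : vertsF ([] : List (RT B)) = [] := by rw [vertsF]
@[simp] lemma vertsF_cons (t : RT B) (ts : List (RT B)) :
    vertsF (t :: ts) = verts t ++ vertsF ts := by rw [vertsF]

@[simp] lemma root_node (v : B) (ts : List (RT B)) : root (.node v ts) = v := rfl

lemma root_mem_verts (t : RT B) : t.root ∈ t.verts := by
  cases t with | node v ts => simp [root]

lemma verts_ne_nil (t : RT B) : t.verts ≠ [] := by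
  cases t with | node v ts => simp

lemma length_verts_pos (t : RT B) : 0 < t.verts.length :=
  List.length_pos_iff.2 t.verts_ne_nil

lemma mem_vertsF {x : B} {ts : List (RT B)} : x ∈ vertsF ts ↔ ∃ t ∈ ts, x ∈ verts t := by
  induction ts with
  | nil => simp
  | cons t ts ih => simp [ih]

lemma perm_vertsF_erase [DecidableEq (RT B)] {ts : List (RT B)} {t : RT B} (h : t ∈ ts) :
    vertsF ts ~ verts t ++ vertsF (ts.erase t) := by
  induction ts with
  | nil => simp at h
  | cons a ts ih =>
    rcases eq_or_ne t a with rfl | hne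
    · simp [List.erase_cons_head]
    · rw [List.erase_cons_tail (by simpa using hne.symm)]
      have ht : t ∈ ts := by simpa [hne] using h
      simp only [vertsF_cons]
      refine ((ih ht).append_left _).trans ?_
      simpa [List.append_assoc] using
        (List.perm_append_comm (l₁ := verts a) (l₂ := verts t)).append_right
          (vertsF (ts.erase t))

/-- Validity of a tree: every edge multiplies by a generator. -/
inductive Valid {B : Type*} [Group B] (S : Set B) : RT B → Prop
  | node (v : B) (ts : List (RT B)) :
      (∀ t ∈ ts, Valid S t) →
      (∀ t ∈ ts, ∃ s ∈ S, t.root = v * s) →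
      Valid S (.node v ts)

lemma Valid.child {B : Type*} [Group B] {S : Set B} {v : B} {ts : List (RT B)}
    (h : Valid S (.node v ts)) {t : RT B} (ht : t ∈ ts) : Valid S t := by
  cases h with | node _ _ h1 h2 => exact h1 t ht

lemma Valid.edge {B : Type*} [Group B] {S : Set B} {v : B} {ts : List (RT B)}
    (h : Valid S (.node v ts)) {t : RT B} (ht : t ∈ ts) : ∃ s ∈ S, t.root = v * s := by
  cases h with | node _ _ h1 h2 => exact h2 t ht

lemma Valid.sub {B : Type*} [Group B] [DecidableEq (RT B)] {S : Set B} {v : B}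
    {ts : List (RT B)} (h : Valid S (.node v ts)) (t : RT B) :
    Valid S (.node v (ts.erase t)) := by
  refine Valid.node _ _ (fun u hu => h.child (List.mem_of_mem_erase hu))
    (fun u hu => h.edge (List.mem_of_mem_erase hu))

mutual
noncomputable def attachT (y x : B) : RT B → RT B
  | .node v ts =>
      if v = y then .node v (.node x [] :: attachF y x ts) else .node v (attachF y x ts)
noncomputable def attachF (y x : B) : List (RT B) → List (RT B)
  | [] => []
  | t :: ts => attachT y x t :: attachF y x ts
end

@[simp] lemma attachF_nil (y x : B) : attachF y x ([] : List (RT B)) = [] := by rw [attachF]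
@[simp] lemma attachF_cons (y x : B) (t : RT B) (ts : List (RT B)) :
    attachF y x (t :: ts) = attachT y x t :: attachF y x ts := by rw [attachF]

lemma attachT_node (y x v : B) (ts : List (RT B)) :
    attachT y x (.node v ts) =
      if v = y then .node v (.node x [] :: attachF y x ts) else .node v (attachF y x ts) := by
  rw [attachT]

@[simp] lemma root_attachT (y x : B) (t : RT B) : (attachT y x t).root = t.root := by
  cases t with | node v ts =>
    rw [attachT_node]
    split <;> simp [root]

lemma mem_attachF {y x : B} {ts : List (RT B)} {u : RT B} (hu : u ∈ attachF y x ts) :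
    ∃ t ∈ ts, u = attachT y x t := by
  induction ts with
  | nil => simp at hu
  | cons t ts ih =>
    rw [attachF_cons] at hu
    rcases List.mem_cons.1 hu with rfl | hu
    · exact ⟨t, by simp⟩
    · rcases ih hu with ⟨t0, ht0, rfl⟩
      exact ⟨t0, by simp [ht0]⟩

mutual
theorem verts_attachT (y x : B) (t : RT B) (hx : x ∉ verts t) (hnd : (verts t).Nodup) :
    (y ∈ verts t → verts (attachT y x t) ~ x :: verts t) ∧
      (y ∉ verts t → verts (attachT y x t) = verts t) := by
  cases t with
  | node v ts =>
    have hx' : x ∉ vertsF ts := by simp at hx; tauto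
    have hnd' : (vertsF ts).Nodup := by simp at hnd; tauto
    have hv : v ∉ vertsF ts := by simp at hnd; tauto
    have IH := verts_attachF y x ts hx' hnd'
    rw [attachT_node]
    by_cases hvy : v = y
    · subst hvy
      rw [if_pos rfl]
      simp only [verts_node, vertsF_cons, verts_node, vertsF_nil, List.nil_append,
        List.cons_append]
      constructor
      · intro _
        rw [IH.2 hv]
        exact List.Perm.swap x v (vertsF ts)
      · intro hy; exact absurd (by simp) hy
    · simp only [if_neg hvy, verts_node]
      constructor
      · intro hy
        have hyF : y ∈ vertsF ts := by simp [hvy] at hy; tauto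
        refine ((IH.1 hyF).cons v).trans ?_
        exact List.Perm.swap x v (vertsF ts)
      · intro hy
        have : y ∉ vertsF ts := by simp at hy; tauto
        rw [IH.2 this]
theorem verts_attachF (y x : B) (ts : List (RT B)) (hx : x ∉ vertsF ts)
    (hnd : (vertsF ts).Nodup) :
    (y ∈ vertsF ts → vertsF (attachF y x ts) ~ x :: vertsF ts) ∧
      (y ∉ vertsF ts → vertsF (attachF y x ts) = vertsF ts) := by
  cases ts with
  | nil => simp
  | cons t ts =>
    have hx1 : x ∉ verts t := fun h => hx (by simp [h])
    have hx2 : x ∉ vertsF ts := fun h => hx (by simp [h])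
    have hnd1 : (verts t).Nodup := ((List.nodup_append.1 (by simpa using hnd)).1)
    have hnd2 : (vertsF ts).Nodup := ((List.nodup_append.1 (by simpa using hnd)).2.1)
    have hdisj := (List.nodup_append.1 (by simpa using hnd)).2.2
    have IH1 := verts_attachT y x t hx1 hnd1
    have IH2 := verts_attachF y x ts hx2 hnd2
    simp only [attachF_cons, vertsF_cons]
    constructor
    · intro hy
      by_cases h1 : y ∈ verts t
      · have h2 : y ∉ vertsF ts := fun h => hdisj y h1 y h rfl
        rw [IH2.2 h2]
        exact ((IH1.1 h1).append_right (vertsF ts))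
      · have h2 : y ∈ vertsF ts := by simp [h1] at hy ⊢; tauto
        rw [IH1.2 h1]
        refine ((IH2.1 h2).append_left (verts t)).trans ?_
        simpa using (List.perm_append_comm (l₁ := verts t) (l₂ := [x])).append_right
          (vertsF ts)
    · intro hy
      have h1 : y ∉ verts t := fun h => hy (by simp [h])
      have h2 : y ∉ vertsF ts := fun h => hy (by simp [h])
      rw [IH1.2 h1, IH2.2 h2]
end

mutual
theorem valid_attachT [Group B] {S : Set B} (y x : B) (hs : ∃ s ∈ S, x = y * s) (t : RT B)
    (h : Valid S t) : Valid S (attachT y x t) := by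
  cases t with
  | node v ts =>
    rw [attachT_node]
    by_cases hvy : v = y
    · rw [if_pos hvy]
      refine Valid.node _ _ ?_ ?_
      · intro u hu
        rcases List.mem_cons.1 hu with rfl | hu
        · exact Valid.node _ _ (by simp) (by simp)
        · exact valid_attachF y x hs ts (fun t ht => h.child ht) u hu
      · intro u hu
        rcases List.mem_cons.1 hu with rfl | hu
        · exact ⟨hs.choose, hs.choose_spec.1, by
            simpa [root, hvy] using hs.choose_spec.2⟩
        · rcases mem_attachF hu with ⟨t0, ht0, rfl⟩
          simpa using h.edge ht0
    · rw [if_neg hvy]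
      refine Valid.node _ _ ?_ ?_
      · exact valid_attachF y x hs ts (fun t ht => h.child ht)
      · intro u hu
        rcases mem_attachF hu with ⟨t0, ht0, rfl⟩
        simpa using h.edge ht0
theorem valid_attachF [Group B] {S : Set B} (y x : B) (hs : ∃ s ∈ S, x = y * s)
    (ts : List (RT B)) (h : ∀ t ∈ ts, Valid S t) :
    ∀ u ∈ attachF y x ts, Valid S u := by
  cases ts with
  | nil => simp
  | cons t ts =>
    intro u hu
    rw [attachF_cons] at hu
    rcases List.mem_cons.1 hu with rfl | hu
    · exact valid_attachT y x hs t (h t (by simp))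
    · exact valid_attachF y x hs ts (fun t ht => h t (by simp [ht])) u hu
end

end RT

section Ham
open RT
open scoped Pointwise

variable [Group B] {S : Set B}

/-- The "distance at most 3" step relation. -/
def R (S : Set B) (x y : B) : Prop := ∃ g ∈ S ∪ S * S ∪ S * S * S, y = x * g

/-- `z` is at distance at most 1 from `a`. -/
def Near (S : Set B) (a z : B) : Prop := z = a ∨ ∃ t ∈ S, z = a * t

lemma near_refl (a : B) : Near S a a := Or.inl rfl

lemma R.symm (hsym : ∀ s ∈ S, s⁻¹ ∈ S) {x y : B} (h : R S x y) : R S y x := by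
  obtain ⟨g, hg, rfl⟩ := h
  refine ⟨g⁻¹, ?_, by group⟩
  rcases hg with (hg | hg) | hg
  · exact Or.inl (Or.inl (hsym g hg))
  · obtain ⟨a, ha, b, hb, rfl⟩ := hg
    exact Or.inl (Or.inr (by simpa [mul_inv_rev] using Set.mul_mem_mul (hsym b hb) (hsym a ha)))
  · obtain ⟨ab, hab, c, hc, rfl⟩ := hg
    obtain ⟨a, ha, b, hb, rfl⟩ := hab
    have : (a * b * c)⁻¹ = c⁻¹ * b⁻¹ * a⁻¹ := by group
    rw [this]
    exact Or.inr (Set.mul_mem_mul (Set.mul_mem_mul (hsym c hc) (hsym b hb)) (hsym a ha))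

lemma connect (hsym : ∀ s ∈ S, s⁻¹ ∈ S) {r c e1 b2 : B} {s : B} (hs : s ∈ S) (hc : c = r * s)
    (h1 : Near S r e1) (h2 : Near S c b2) : R S e1 b2 := by
  subst hc
  rcases h1 with rfl | ⟨t, ht, rfl⟩
  · rcases h2 with rfl | ⟨u, hu, rfl⟩
    · exact ⟨s, Or.inl (Or.inl hs), rfl⟩
    · exact ⟨s * u, Or.inl (Or.inr (Set.mul_mem_mul hs hu)), by group⟩
  · rcases h2 with rfl | ⟨u, hu, rfl⟩
    · exact ⟨t⁻¹ * s, Or.inl (Or.inr (Set.mul_mem_mul (hsym t ht) hs)), by group⟩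
    · exact ⟨t⁻¹ * s * u,
        Or.inr (Set.mul_mem_mul (Set.mul_mem_mul (hsym t ht) hs) hu), by group⟩

lemma chain'_reverse_of_symm (hsym : ∀ s ∈ S, s⁻¹ ∈ S) {L : List B} (h : L.Chain' (R S)) :
    L.reverse.Chain' (R S) :=
  List.isChain_reverse.2 (h.imp fun _ _ hab => R.symm hsym hab)

/-- Sekanina's lemma, edge version: if `tc` is a child subtree of the root `r`, then there
is a Hamiltonian path of the tree from `r` to the root of `tc` in the cube. -/
theorem hamE (hsym : ∀ s ∈ S, s⁻¹ ∈ S) :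
    ∀ n : ℕ, ∀ (r : B) (ts : List (RT B)), (verts (.node r ts)).length ≤ n →
      Valid S (.node r ts) → (verts (.node r ts)).Nodup →
      ∀ tc ∈ ts, ∃ L : List B, L.Chain' (R S) ∧ L ~ verts (.node r ts) ∧
        L.head? = some r ∧ L.getLast? = some tc.root := by
  intro n
  induction n using Nat.strong_induction_on with
  | _ n IH =>
    intro r ts hlen hval hnd tc htc
    classical
    -- part 2 helper : Hamiltonian path of a subtree from near its root to its root
    have part2 : ∀ t : RT B, (verts t).length < n → Valid S t → (verts t).Nodup →
        ∃ L : List B, L.Chain' (R S) ∧ L ~ verts t ∧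
          ∃ b, L.head? = some b ∧ Near S t.root b ∧ L.getLast? = some t.root := by
      rintro ⟨c, cs⟩ hm hv hn
      cases cs with
      | nil => exact ⟨[c], List.isChain_singleton _, by simp, c, by simp, near_refl c, by simp [root]⟩
      | cons d rest =>
        obtain ⟨L, hc, hp, hh, hl⟩ := IH _ hm c (d :: rest) le_rfl hv hn d (by simp)
        obtain ⟨s', hs', hcs'⟩ := hv.edge (t := d) (by simp)
        refine ⟨L.reverse, chain'_reverse_of_symm hsym hc, (List.reverse_perm L).trans hp, d.root,
          by simpa using hl, Or.inr ⟨s', hs', by simpa [root] using hcs'⟩,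
          by simpa [root] using hh⟩
    -- part 1 helper : Hamiltonian path from `r` ending near `r`
    have part1 : ∀ us : List (RT B), (verts (.node r us)).length < n →
        Valid S (.node r us) → (verts (.node r us)).Nodup →
        ∃ L : List B, L.Chain' (R S) ∧ L ~ verts (.node r us) ∧
          L.head? = some r ∧ ∃ e, L.getLast? = some e ∧ Near S r e := by
      intro us hm hv hn
      cases us with
      | nil => exact ⟨[r], List.isChain_singleton _, by simp, by simp, r, by simp, near_refl r⟩
      | cons u us' =>
        obtain ⟨L, hc, hp, hh, hl⟩ := IH _ hm r (u :: us') le_rfl hv hn u (by simp)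
        obtain ⟨s', hs', hcs'⟩ := hv.edge (t := u) (by simp)
        exact ⟨L, hc, hp, hh, u.root, hl, Or.inr ⟨s', hs', hcs'⟩⟩
    obtain ⟨s, hsS, hcs⟩ := hval.edge htc
    have hperm : vertsF ts ~ verts tc ++ vertsF (ts.erase tc) := perm_vertsF_erase htc
    have hpermT : verts (.node r ts) ~ verts (.node r (ts.erase tc)) ++ verts tc := by
      simp only [verts_node]
      refine (hperm.cons r).trans ?_
      refine (List.Perm.cons r (List.perm_append_comm)).trans ?_
      simp
    have hndsplit : (verts (.node r (ts.erase tc)) ++ verts tc).Nodup := hnd.perm hpermT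
    have hnd1 : (verts (.node r (ts.erase tc))).Nodup := (List.nodup_append.1 hndsplit).1
    have hnd2 : (verts tc).Nodup := (List.nodup_append.1 hndsplit).2.1
    have hval1 : Valid S (.node r (ts.erase tc)) := hval.sub tc
    have hval2 : Valid S tc := hval.child htc
    have hlentc : 1 ≤ (verts tc).length := length_verts_pos tc
    have hlen1 : 1 ≤ (verts (.node r (ts.erase tc))).length := length_verts_pos _
    have hltot : (verts (.node r (ts.erase tc))).length + (verts tc).length
        = (verts (.node r ts)).length := by
      rw [hpermT.length_eq, List.length_append]
    obtain ⟨L1, hc1, hp1, hh1, e1, hl1, hnear1⟩ :=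
      part1 (ts.erase tc) (by omega) hval1 hnd1
    obtain ⟨L2, hc2, hp2, b2, hh2, hnear2, hl2⟩ := part2 tc (by omega) hval2 hnd2
    have hL1ne : L1 ≠ [] := by intro h; rw [h] at hh1; simp at hh1
    have hL2ne : L2 ≠ [] := by intro h; rw [h] at hh2; simp at hh2
    refine ⟨L1 ++ L2, ?_, ?_, ?_, ?_⟩
    · refine List.isChain_append.2 ⟨hc1, hc2, ?_⟩
      intro x hx y hy
      rw [hl1] at hx; rw [hh2] at hy
      cases hx; cases hy
      exact connect hsym hsS hcs hnear1 hnear2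
    · exact (hp1.append hp2).trans hpermT.symm
    · rw [List.head?_append_of_ne_nil _ hL1ne, hh1]
    · rw [List.getLast?_append_of_ne_nil _ hL2ne, hl2]

/-- Sekanina's lemma: Hamiltonian path in the cube of a tree from the root to any
other vertex. -/
theorem hamH (hsym : ∀ s ∈ S, s⁻¹ ∈ S) :
    ∀ n : ℕ, ∀ (r : B) (ts : List (RT B)), (verts (.node r ts)).length ≤ n →
      Valid S (.node r ts) → (verts (.node r ts)).Nodup →
      ∀ v ∈ vertsF ts, ∃ L : List B, L.Chain' (R S) ∧ L ~ verts (.node r ts) ∧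
        L.head? = some r ∧ L.getLast? = some v := by
  intro n
  induction n using Nat.strong_induction_on with
  | _ n IH =>
    intro r ts hlen hval hnd v hv
    classical
    obtain ⟨tw, htw, hvtw⟩ := mem_vertsF.1 hv
    obtain ⟨s, hsS, hcs⟩ := hval.edge htw
    have hperm : vertsF ts ~ verts tw ++ vertsF (ts.erase tw) := perm_vertsF_erase htw
    have hpermT : verts (.node r ts) ~ verts (.node r (ts.erase tw)) ++ verts tw := by
      simp only [verts_node]
      refine (hperm.cons r).trans ?_
      refine (List.Perm.cons r (List.perm_append_comm)).trans ?_
      simp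
    have hndsplit : (verts (.node r (ts.erase tw)) ++ verts tw).Nodup := hnd.perm hpermT
    have hnd1 : (verts (.node r (ts.erase tw))).Nodup := (List.nodup_append.1 hndsplit).1
    have hnd2 : (verts tw).Nodup := (List.nodup_append.1 hndsplit).2.1
    have hval1 : Valid S (.node r (ts.erase tw)) := hval.sub tw
    have hval2 : Valid S tw := hval.child htw
    have hlentw : 1 ≤ (verts tw).length := length_verts_pos tw
    have hlen1 : 1 ≤ (verts (.node r (ts.erase tw))).length := length_verts_pos _
    have hltot : (verts (.node r (ts.erase tw))).length + (verts tw).length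
        = (verts (.node r ts)).length := by
      rw [hpermT.length_eq, List.length_append]
    -- part 1 : Hamiltonian path of the rest from `r` ending near `r`
    obtain ⟨L1, hc1, hp1, hh1, e1, hl1, hnear1⟩ :
        ∃ L : List B, L.Chain' (R S) ∧ L ~ verts (.node r (ts.erase tw)) ∧
          L.head? = some r ∧ ∃ e, L.getLast? = some e ∧ Near S r e := by
      cases hus : ts.erase tw with
      | nil => exact ⟨[r], List.isChain_singleton _, by simp, by simp, r, by simp, near_refl r⟩
      | cons u us' =>
        obtain ⟨L, hc, hp, hh, hl⟩ := hamE hsym _ r (u :: us') le_rfl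
          (by rw [← hus]; exact hval1) (by rw [← hus]; exact hnd1) u (by simp)
        obtain ⟨s', hs', hcs'⟩ := (hus ▸ hval1).edge (t := u) (by simp)
        exact ⟨L, hc, hp, hh, u.root, hl, Or.inr ⟨s', hs', hcs'⟩⟩
    -- part 2 : Hamiltonian path of `tw` from near its root to `v`
    obtain ⟨L2, hc2, hp2, b2, hh2, hnear2, hl2⟩ :
        ∃ L : List B, L.Chain' (R S) ∧ L ~ verts tw ∧
          ∃ b, L.head? = some b ∧ Near S tw.root b ∧ L.getLast? = some v := by
      by_cases hvr : v = tw.root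
      · subst hvr
        obtain ⟨c, cs⟩ := tw
        cases cs with
        | nil => exact ⟨[c], List.isChain_singleton _, by simp, c, by simp, near_refl _, by simp [root]⟩
        | cons d rest =>
          obtain ⟨L, hc, hp, hh, hl⟩ := hamE hsym _ c (d :: rest) le_rfl hval2 hnd2 d
            (by simp)
          obtain ⟨s', hs', hcs'⟩ := hval2.edge (t := d) (by simp)
          exact ⟨L.reverse, chain'_reverse_of_symm hsym hc, (List.reverse_perm L).trans hp,
            d.root, by simpa using hl, Or.inr ⟨s', hs', by simpa [root] using hcs'⟩,
            by simpa [root] using hh⟩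
      · obtain ⟨c, cs⟩ := tw
        have hvcs : v ∈ vertsF cs := by
          have := hvtw
          simp only [verts_node, List.mem_cons] at this
          rcases this with rfl | h
          · exact absurd (by simp) hvr
          · exact h
        obtain ⟨L, hc, hp, hh, hl⟩ := IH ((verts (RT.node c cs)).length) (by omega) c cs
          le_rfl hval2 hnd2 v hvcs
        exact ⟨L, hc, hp, c, hh, by simp [root, near_refl], hl⟩
    have hL1ne : L1 ≠ [] := by intro h; rw [h] at hh1; simp at hh1
    have hL2ne : L2 ≠ [] := by intro h; rw [h] at hh2; simp at hh2
    refine ⟨L1 ++ L2, ?_, ?_, ?_, ?_⟩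
    · refine List.isChain_append.2 ⟨hc1, hc2, ?_⟩
      intro x hx y hy
      rw [hl1] at hx; rw [hh2] at hy
      cases hx; cases hy
      exact connect hsym hsS hcs hnear1 hnear2
    · exact (hp1.append hp2).trans hpermT.symm
    · rw [List.head?_append_of_ne_nil _ hL1ne, hh1]
    · rw [List.getLast?_append_of_ne_nil _ hL2ne, hl2]

end Ham

section WL
open RT
open scoped Pointwise

variable [Group B] {S : Set B}

lemma wl_set_nonempty (hgen : ∀ x : B, ∃ l : List B, (∀ y ∈ l, y ∈ S) ∧ l.prod = x) (x : B) :
    {n | ∃ l : List B, (∀ y ∈ l, y ∈ S) ∧ l.length = n ∧ l.prod = x}.Nonempty := by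
  obtain ⟨l, hl, hp⟩ := hgen x
  exact ⟨l.length, l, hl, rfl, hp⟩

lemma exists_word (hgen : ∀ x : B, ∃ l : List B, (∀ y ∈ l, y ∈ S) ∧ l.prod = x) (x : B) :
    ∃ l : List B, (∀ y ∈ l, y ∈ S) ∧ l.length = wordLength S x ∧ l.prod = x :=
  Nat.sInf_mem (wl_set_nonempty hgen x)

lemma wordLength_le {x : B} {l : List B} (hl : ∀ y ∈ l, y ∈ S) (hp : l.prod = x) :
    wordLength S x ≤ l.length :=
  Nat.sInf_le ⟨l, hl, rfl, hp⟩

lemma wordLength_one : wordLength S (1 : B) = 0 :=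
  Nat.le_zero.1 (by simpa using wordLength_le (x := (1 : B)) (l := []) (by simp) (by simp))

lemma decomp (hgen : ∀ x : B, ∃ l : List B, (∀ y ∈ l, y ∈ S) ∧ l.prod = x) {x : B}
    (hx : x ≠ 1) : ∃ y s, s ∈ S ∧ x = y * s ∧ wordLength S y < wordLength S x := by
  obtain ⟨l, hl, hlen, hp⟩ := exists_word hgen x
  have hne : l ≠ [] := by rintro rfl; exact hx (by simpa using hp.symm)
  refine ⟨l.dropLast.prod, l.getLast hne, hl _ (List.getLast_mem hne), ?_, ?_⟩
  · rw [← hp]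
    conv_lhs => rw [← List.dropLast_append_getLast hne]
    simp
  · have h1 : wordLength S l.dropLast.prod ≤ l.dropLast.length :=
      wordLength_le (fun y hy => hl y (List.dropLast_subset l hy)) rfl
    have h2 : l.dropLast.length < l.length := by
      rw [List.length_dropLast]
      have : 0 < l.length := List.length_pos_iff.2 hne
      omega
    omega

lemma ball_finite (hfin : S.Finite)
    (hgen : ∀ x : B, ∃ l : List B, (∀ y ∈ l, y ∈ S) ∧ l.prod = x) :
    ∀ m : ℕ, {x : B | wordLength S x ≤ m}.Finite := by
  intro m
  induction m with
  | zero =>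
    refine Set.Finite.subset (Set.finite_singleton 1) ?_
    intro x hx
    obtain ⟨l, hl, hlen, hp⟩ := exists_word hgen x
    have : l.length = 0 := by simp at hx; omega
    simp only [Set.mem_singleton_iff]
    rw [← hp, List.length_eq_zero_iff.1 this]; simp
  | succ m ih =>
    refine Set.Finite.subset (ih.union (ih.mul hfin)) ?_
    intro x hx
    by_cases h : wordLength S x ≤ m
    · exact Or.inl h
    · have hx1 : x ≠ 1 := by rintro rfl; rw [wordLength_one] at h; omega
      obtain ⟨y, s, hs, rfl, hlt⟩ := decomp hgen hx1
      have : wordLength S y ≤ m := by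
        have := hx; simp only [Set.mem_setOf_eq] at this; omega
      exact Or.inr (Set.mul_mem_mul this hs)

lemma gen_words (hsym : ∀ s ∈ S, s⁻¹ ∈ S) (hcl : Subgroup.closure S = ⊤) (x : B) :
    ∃ l : List B, (∀ y ∈ l, y ∈ S) ∧ l.prod = x := by
  have hx : x ∈ (Subgroup.closure S).toSubmonoid := by rw [hcl]; trivial
  rw [Subgroup.closure_toSubmonoid] at hx
  obtain ⟨l, hl, hp⟩ := Submonoid.exists_list_of_mem_closure hx
  refine ⟨l, fun y hy => ?_, hp⟩
  rcases hl y hy with h | h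
  · exact h
  · have : y⁻¹ ∈ S := Set.mem_inv.1 h
    simpa using hsym _ this

lemma exists_spanning_tree :
    ∀ (n : ℕ) (F : Finset B), F.card ≤ n → (1 : B) ∈ F →
    (∀ x ∈ F, x ≠ 1 → ∃ y ∈ F, (∃ s ∈ S, x = y * s) ∧ wordLength S y < wordLength S x) →
    ∃ T : RT B, Valid S T ∧ T.root = 1 ∧ T.verts.Nodup ∧ ∀ z, z ∈ T.verts ↔ z ∈ F := by
  intro n
  induction n with
  | zero => intro F hcard h1 _; exact absurd (Finset.card_pos.2 ⟨1, h1⟩) (by omega)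
  | succ n ih =>
    intro F hcard h1 hH
    by_cases hne : (F.erase 1).Nonempty
    · obtain ⟨x, hxm, hxmax⟩ := Finset.exists_max_image (F.erase 1) (wordLength S) hne
      have hxF : x ∈ F := Finset.mem_of_mem_erase hxm
      have hx1 : x ≠ 1 := Finset.ne_of_mem_erase hxm
      obtain ⟨y, hyF, ⟨s, hs, hxy⟩, hlt⟩ := hH x hxF hx1
      have hyx : y ≠ x := fun h => by rw [h] at hlt; omega
      have hyF' : y ∈ F.erase x := Finset.mem_erase.2 ⟨hyx, hyF⟩
      have h1' : (1 : B) ∈ F.erase x := Finset.mem_erase.2 ⟨(Ne.symm hx1), h1⟩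
      have hcard' : (F.erase x).card ≤ n := by
        have := Finset.card_erase_of_mem hxF
        have := Finset.card_pos.2 ⟨1, h1⟩
        omega
      have hH' : ∀ z ∈ F.erase x, z ≠ 1 →
          ∃ y ∈ F.erase x, (∃ s ∈ S, z = y * s) ∧ wordLength S y < wordLength S z := by
        intro z hz hz1
        obtain ⟨w, hwF, hws, hwlt⟩ := hH z (Finset.mem_of_mem_erase hz) hz1
        have hzmax : wordLength S z ≤ wordLength S x :=
          hxmax z (Finset.mem_erase.2 ⟨hz1, Finset.mem_of_mem_erase hz⟩)
        have hwx : w ≠ x := fun h => by rw [h] at hwlt; omega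
        exact ⟨w, Finset.mem_erase.2 ⟨hwx, hwF⟩, hws, hwlt⟩
      obtain ⟨T, hTv, hTr, hTnd, hTm⟩ := ih (F.erase x) hcard' h1' hH'
      have hyT : y ∈ T.verts := (hTm y).2 hyF'
      have hxT : x ∉ T.verts := fun h => Finset.notMem_erase x F ((hTm x).1 h)
      have hperm := (verts_attachT y x T hxT hTnd).1 hyT
      refine ⟨attachT y x T, valid_attachT y x ⟨s, hs, hxy⟩ T hTv, by simpa using hTr,
        ?_, ?_⟩
      · exact hperm.nodup_iff.2 (by simp [hTnd, hxT])
      · intro z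
        rw [hperm.mem_iff]
        simp only [List.mem_cons, hTm]
        constructor
        · rintro (rfl | h)
          · exact hxF
          · exact Finset.mem_of_mem_erase h
        · intro hz
          rcases eq_or_ne z x with rfl | hzx
          · exact Or.inl rfl
          · exact Or.inr (Finset.mem_erase.2 ⟨hzx, hz⟩)
    · have hF : F = {1} := by
        apply Finset.eq_singleton_iff_unique_mem.2
        refine ⟨h1, fun z hz => ?_⟩
        by_contra hz1
        exact hne ⟨z, Finset.mem_erase.2 ⟨hz1, hz⟩⟩
      refine ⟨.node 1 [], Valid.node _ _ (by simp) (by simp), rfl, by simp, ?_⟩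
      intro z; simp [hF]

end WL

section Walks
open RT
open scoped Pointwise

variable [Group B] {S : Set B}

lemma adj_of_R {x y : B} (hne : x ≠ y) (h : R S x y) :
    (cayley (S ∪ S * S ∪ S * S * S)).Adj x y := by
  rw [cayley, SimpleGraph.fromRel_adj]
  exact ⟨hne, Or.inl h⟩

lemma chain'_adj_of_nodup :
    ∀ {L : List B}, L.Chain' (R S) → L.Nodup →
      L.Chain' (cayley (S ∪ S * S ∪ S * S * S)).Adj := by
  intro L
  induction L with
  | nil => intro _ _; exact List.isChain_nil
  | cons a l ih =>
    intro hc hnd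
    cases l with
    | nil => exact List.isChain_singleton _
    | cons b l' =>
      simp only [List.Chain', List.isChain_cons_cons] at hc ⊢
      have hab : a ≠ b := by
        intro h; subst h
        simp at hnd
      exact ⟨adj_of_R hab hc.1, ih hc.2 (List.Nodup.of_cons hnd)⟩

lemma walk_of_chain {V : Type*} (G : SimpleGraph V) :
    ∀ (l : List V) (a b : V), List.Chain G.Adj a l → (a :: l).getLast? = some b →
      ∃ w : G.Walk a b, w.support = a :: l := by
  intro l
  induction l with
  | nil =>
    intro a b _ hl
    simp only [List.getLast?_singleton, Option.some.injEq] at hl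
    subst hl
    exact ⟨SimpleGraph.Walk.nil, rfl⟩
  | cons c l ih =>
    intro a b hc hl
    simp only [List.Chain, List.isChain_cons_cons] at hc
    obtain ⟨w, hw⟩ := ih c b hc.2 (by rw [← hl]; rw [List.getLast?_cons_cons])
    exact ⟨SimpleGraph.Walk.cons hc.1 w, by simp [hw]⟩

lemma reach_in_induce (G : SimpleGraph B) (Fs : Set B) :
    ∀ (l : List B) (a b : B) (ha : a ∈ Fs) (hb : b ∈ Fs), (∀ x ∈ l, x ∈ Fs) →
      List.Chain G.Adj a l → (a :: l).getLast? = some b →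
      (G.induce Fs).Reachable ⟨a, ha⟩ ⟨b, hb⟩ := by
  intro l
  induction l with
  | nil =>
    intro a b ha hb _ _ hl
    simp only [List.getLast?_singleton, Option.some.injEq] at hl
    subst hl
    rfl
  | cons c l ih =>
    intro a b ha hb hmem hc hl
    simp only [List.Chain, List.isChain_cons_cons] at hc
    have hcF : c ∈ Fs := hmem c (by simp)
    have hadj : (G.induce Fs).Adj ⟨a, ha⟩ ⟨c, hcF⟩ := hc.1
    exact hadj.reachable.trans
      (ih c b hcF hb (fun x hx => hmem x (by simp [hx])) hc.2
        (by rw [← hl]; rw [List.getLast?_cons_cons]))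

lemma expand_word (hsub : ∀ g ∈ S ∪ S * S ∪ S * S * S, ∃ l : List B,
      (∀ y ∈ l, y ∈ S) ∧ l.prod = g ∧ l.length ≤ 3) :
    ∀ l : List B, (∀ y ∈ l, y ∈ S ∪ S * S ∪ S * S * S) →
      ∃ l' : List B, (∀ y ∈ l', y ∈ S) ∧ l'.prod = l.prod ∧ l'.length ≤ 3 * l.length := by
  intro l
  induction l with
  | nil => intro _; exact ⟨[], by simp, by simp, by simp⟩
  | cons g l ih =>
    intro hmem
    obtain ⟨l', hl', hp', hlen'⟩ := ih (fun y hy => hmem y (by simp [hy]))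
    obtain ⟨lg, hlg, hpg, hleng⟩ := hsub g (hmem g (by simp))
    refine ⟨lg ++ l', ?_, ?_, ?_⟩
    · intro y hy; rcases List.mem_append.1 hy with h | h
      · exact hlg y h
      · exact hl' y h
    · rw [List.prod_append, hpg, hp', List.prod_cons]
    · rw [List.length_append, List.length_cons]
      omega

lemma mem_cube_expand : ∀ g ∈ S ∪ S * S ∪ S * S * S, ∃ l : List B,
    (∀ y ∈ l, y ∈ S) ∧ l.prod = g ∧ l.length ≤ 3 := by
  rintro g ((hg | hg) | hg)
  · exact ⟨[g], by simpa using hg, by simp, by simp⟩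
  · obtain ⟨a, ha, b, hb, rfl⟩ := hg
    exact ⟨[a, b], by simp [ha, hb], by simp, by simp⟩
  · obtain ⟨ab, hab, c, hc, rfl⟩ := hg
    obtain ⟨a, ha, b, hb, rfl⟩ := hab
    exact ⟨[a, b, c], by simp [ha, hb, hc], by simp [mul_assoc], by simp⟩

end Walks
end QH

open scoped Pointwise in
/-- For every infinite finitely generated group `B` with finite symmetric generating set
`S`, the pair `(B, S ∪ S² ∪ S³)` is a quasi-Hamiltonian presentation. -/
theorem cube_genset_isQuasiHamiltonian {B : Type*} [Group B] [Infinite B]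
    (S : Set B) (hS : IsSymmGen S) :
    IsQuasiHamiltonian (S ∪ S * S ∪ S * S * S) := by
  classical
  obtain ⟨hfin, hsym, hcl⟩ := hS
  have hgen : ∀ x : B, ∃ l : List B, (∀ y ∈ l, y ∈ S) ∧ l.prod = x :=
    QH.gen_words hsym hcl
  refine ⟨0, {F : Finset B | ∃ T : QH.RT B, QH.RT.Valid S T ∧ T.root = 1 ∧ T.verts.Nodup ∧
    (∀ z, z ∈ T.verts ↔ z ∈ F) ∧ 2 ≤ F.card}, ?_, ?_, ?_⟩
  · -- each F contains 1 and induces a connected subgraph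
    rintro F ⟨⟨r, ts⟩, hTv, hTr, hTnd, hTm, hF2⟩
    rw [QH.RT.root_node] at hTr
    subst hTr
    have h1F : (1 : B) ∈ F := (hTm 1).1 (by simp)
    refine ⟨h1F, ?_⟩
    rw [SimpleGraph.connected_iff]
    have h1F' : (1 : B) ∈ (↑F : Set B) := by simpa using h1F
    have reach1 : ∀ (z : B) (hz : z ∈ (↑F : Set B)),
        ((cayley (S ∪ S * S ∪ S * S * S)).induce (↑F : Set B)).Reachable ⟨1, h1F'⟩
          ⟨z, hz⟩ := by
      intro z hz
      rcases eq_or_ne z 1 with rfl | hz1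
      · rfl
      · have hzF : z ∈ F := by simpa using hz
        have hzts : z ∈ QH.RT.vertsF ts := by
          have := (hTm z).2 hzF
          simp only [QH.RT.verts_node, List.mem_cons] at this
          tauto
        obtain ⟨L, hLc, hLp, hLh, hLl⟩ := QH.hamH hsym _ 1 ts le_rfl hTv hTnd z hzts
        have hLnd : L.Nodup := hLp.nodup_iff.2 hTnd
        have hLadj := QH.chain'_adj_of_nodup hLc hLnd
        obtain ⟨Lt, rfl⟩ : ∃ t, L = 1 :: t := by
          cases L with
          | nil => simp at hLh
          | cons a t => simp only [List.head?_cons, Option.some.injEq] at hLh; exact ⟨t, by rw [hLh]⟩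
        have hchain : List.Chain (cayley (S ∪ S * S ∪ S * S * S)).Adj 1 Lt := hLadj
        exact QH.reach_in_induce _ _ Lt 1 z h1F' hz
          (fun x hx => by
            have : x ∈ QH.RT.verts (QH.RT.node 1 ts) := hLp.subset (by simp [hx])
            simpa using (hTm x).1 this)
          hchain hLl
    refine ⟨fun u v => ?_, ⟨⟨1, h1F'⟩⟩⟩
    exact (reach1 u.1 u.2).symm.trans (reach1 v.1 v.2)
  · -- balls are contained in members of the family
    intro n hn
    have hgen3 : ∀ x : B, ∃ l : List B,
        (∀ y ∈ l, y ∈ S ∪ S * S ∪ S * S * S) ∧ l.prod = x := by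
      intro x
      obtain ⟨l, hl, hp⟩ := hgen x
      exact ⟨l, fun y hy => Or.inl (Or.inl (hl y hy)), hp⟩
    have hball := QH.ball_finite hfin hgen (3 * n)
    set F : Finset B := hball.toFinset with hFdef
    have hmemF : ∀ z : B, z ∈ F ↔ wordLength S z ≤ 3 * n := by
      intro z; simp [hFdef]
    have h1F : (1 : B) ∈ F := (hmemF 1).2 (by rw [QH.wordLength_one]; omega)
    have hH : ∀ x ∈ F, x ≠ 1 →
        ∃ y ∈ F, (∃ s ∈ S, x = y * s) ∧ wordLength S y < wordLength S x := by
      intro x hx hx1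
      obtain ⟨y, s, hs, hxy, hlt⟩ := QH.decomp hgen hx1
      refine ⟨y, (hmemF y).2 ?_, ⟨s, hs, hxy⟩, hlt⟩
      have := (hmemF x).1 hx
      omega
    obtain ⟨T, hTv, hTr, hTnd, hTm⟩ :=
      QH.exists_spanning_tree F.card F le_rfl h1F hH
    have hs0 : ∃ s ∈ S, s ≠ 1 := by
      by_contra h
      push_neg at h
      have hle : Subgroup.closure S ≤ ⊥ :=
        (Subgroup.closure_le ⊥).2 (fun s hs => by simp [h s hs])
      rw [hcl] at hle
      obtain ⟨a, b, hab⟩ := exists_pair_ne B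
      have ha := hle (Subgroup.mem_top a)
      have hb := hle (Subgroup.mem_top b)
      rw [Subgroup.mem_bot] at ha hb
      exact hab (by rw [ha, hb])
    obtain ⟨s0, hs0S, hs01⟩ := hs0
    have hs0F : s0 ∈ F := by
      refine (hmemF s0).2 ?_
      have : wordLength S s0 ≤ 1 :=
        QH.wordLength_le (l := [s0]) (by simpa using hs0S) (by simp)
      omega
    have hF2 : 2 ≤ F.card := by
      have : 1 < F.card := Finset.one_lt_card.2 ⟨1, h1F, s0, hs0F, (Ne.symm hs01)⟩
      omega
    refine ⟨F, ⟨T, hTv, hTr, hTnd, hTm, hF2⟩, ?_⟩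
    intro x hx
    obtain ⟨l3, hl3, hlen3, hp3⟩ := QH.exists_word hgen3 x
    obtain ⟨l', hl', hp', hlen'⟩ := QH.expand_word QH.mem_cube_expand l3 hl3
    refine (hmemF x).2 ?_
    have : wordLength S x ≤ l'.length := QH.wordLength_le hl' (by rw [hp', hp3])
    omega
  · -- the travelling-salesman bound
    rintro F ⟨⟨r, ts⟩, hTv, hTr, hTnd, hTm, hF2⟩ x hxF
    rw [QH.RT.root_node] at hTr
    subst hTr
    have hcardF : F.card = (QH.RT.verts (QH.RT.node 1 ts)).length := by
      have hFeq : F = (QH.RT.verts (QH.RT.node 1 ts)).toFinset :=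
        Finset.ext (fun z => by rw [List.mem_toFinset, hTm z])
      rw [hFeq, List.toFinset_card_of_nodup hTnd]
    rcases eq_or_ne x 1 with rfl | hx1
    · -- closed covering walk of length `F.card`
      cases ts with
      | nil =>
        exfalso
        rw [hcardF] at hF2
        simp at hF2
      | cons tc ts' =>
        obtain ⟨L, hLc, hLp, hLh, hLl⟩ := QH.hamE hsym _ 1 (tc :: ts') le_rfl hTv hTnd
          tc (by simp)
        obtain ⟨s, hsS, hcs⟩ := hTv.edge (t := tc) (by simp)
        have hLnd : L.Nodup := hLp.nodup_iff.2 hTnd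
        have hLadj := QH.chain'_adj_of_nodup hLc hLnd
        have hne : (1 : B) ≠ tc.root := by
          intro h
          have h1nf : (1 : B) ∉ QH.RT.vertsF (tc :: ts') := by
            have := hTnd
            simp only [QH.RT.verts_node, List.nodup_cons] at this
            exact this.1
          exact h1nf (h ▸ QH.RT.mem_vertsF.2 ⟨tc, by simp, QH.RT.root_mem_verts tc⟩)
        have hadj : (cayley (S ∪ S * S ∪ S * S * S)).Adj tc.root 1 :=
          (QH.adj_of_R hne ⟨s, Or.inl (Or.inl hsS), hcs⟩).symm
        have hchainL' : (L ++ [1]).Chain' (cayley (S ∪ S * S ∪ S * S * S)).Adj := by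
          refine List.isChain_append.2 ⟨hLadj, List.isChain_singleton _, ?_⟩
          intro a ha b hb
          rw [hLl] at ha
          simp only [List.head?_cons, Option.some.injEq] at hb
          cases ha; cases hb
          exact hadj
        obtain ⟨Lt, rfl⟩ : ∃ t, L = 1 :: t := by
          cases L with
          | nil => simp at hLh
          | cons a t =>
            simp only [List.head?_cons, Option.some.injEq] at hLh
            exact ⟨t, by rw [hLh]⟩
        have hchain : List.Chain (cayley (S ∪ S * S ∪ S * S * S)).Adj 1 (Lt ++ [1]) := by
          have := hchainL'
          rw [List.cons_append] at this
          exact this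
        obtain ⟨w, hw⟩ := QH.walk_of_chain _ (Lt ++ [1]) 1 1 hchain
          (by rw [← List.cons_append, List.getLast?_append_of_ne_nil _ (by simp)]; simp)
        have hwlen : w.length = F.card := by
          have := w.length_support
          rw [hw] at this
          have hlen := hLp.length_eq
          simp only [List.length_cons, List.length_append, List.length_nil] at this hlen ⊢
          rw [hcardF]
          omega
        refine le_trans (Nat.sInf_le ⟨w, ?_, rfl⟩) (by omega)
        intro z hz
        rw [hw]
        have hzL : z ∈ (1 : B) :: Lt := hLp.mem_iff.2 ((hTm z).2 (by simpa using hz))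
        rcases List.mem_cons.1 hzL with rfl | h
        · exact List.mem_cons_self
        · exact List.mem_cons_of_mem _ (List.mem_append_left _ h)
    · -- Hamiltonian path from 1 to x
      have hxts : x ∈ QH.RT.vertsF ts := by
        have := (hTm x).2 hxF
        simp only [QH.RT.verts_node, List.mem_cons] at this
        tauto
      obtain ⟨L, hLc, hLp, hLh, hLl⟩ := QH.hamH hsym _ 1 ts le_rfl hTv hTnd x hxts
      have hLnd : L.Nodup := hLp.nodup_iff.2 hTnd
      have hLadj := QH.chain'_adj_of_nodup hLc hLnd
      obtain ⟨Lt, rfl⟩ : ∃ t, L = 1 :: t := by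
        cases L with
        | nil => simp at hLh
        | cons a t =>
          simp only [List.head?_cons, Option.some.injEq] at hLh
          exact ⟨t, by rw [hLh]⟩
      have hchain : List.Chain (cayley (S ∪ S * S ∪ S * S * S)).Adj 1 Lt := hLadj
      obtain ⟨w, hw⟩ := QH.walk_of_chain _ Lt 1 x hchain hLl
      have hwlen : w.length + 1 = F.card := by
        have := w.length_support
        rw [hw] at this
        have hlen := hLp.length_eq
        rw [hcardF]
        simp only [List.length_cons] at hlen this
        omega
      refine le_trans (Nat.sInf_le ⟨w, ?_, rfl⟩) (by omega)
      intro z hz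
      rw [hw]
      exact hLp.mem_iff.2 ((hTm z).2 (by simpa using hz))
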